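/- Let u ∈ ℝⁿ be a fixed vector and R an m×n random matrix with entries i.i.d. N(0, 2/m). Define v = ReLU(Ru) entrywise. Then E[‖v‖²] = ‖u‖². -/

import Mathlib

open MeasureTheory ProbabilityTheory Real

open scoped NNReal ENNReal

lemma aux_int_odd {b : ℝ} : ∫ x : ℝ, x * rexp (-b * x^2) = 0 := by
  have h := integral_neg_eq_self (fun x : ℝ => x * rexp (-b * x^2)) (volume : Measure ℝ)
  simp only [neg_sq, neg_mul] at h
  rw [integral_neg] at h
  simp only [neg_mul]
  linarith

lemma aux_int_sq {b : ℝ} (hb : 0 < b) :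
    ∫ x : ℝ, x ^ 2 * rexp (-b * x^2) = b ^ (-(3:ℝ)/2) * (Real.sqrt π / 2) := by
  have h1 : ∫ x : ℝ, x ^ 2 * rexp (-b * x^2)
      = 2 * ∫ x in Set.Ioi (0:ℝ), x ^ 2 * rexp (-b * x^2) := by
    rw [← integral_comp_abs (f := fun x => x ^ 2 * rexp (-b * x^2))]
    congr 1 with x
    rw [sq_abs]
  have h2 : ∫ x in Set.Ioi (0:ℝ), x ^ 2 * rexp (-b * x^2)
      = ∫ x in Set.Ioi (0:ℝ), x ^ (2:ℝ) * rexp (-b * x ^ (2:ℝ)) := by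
    refine setIntegral_congr_fun measurableSet_Ioi (fun x hx => ?_)
    rw [show ((2:ℝ)) = ((2:ℕ):ℝ) by norm_num, Real.rpow_natCast]
  rw [h1, h2, integral_rpow_mul_exp_neg_mul_rpow (by norm_num) (by norm_num) hb]
  rw [show ((2:ℝ)+1)/2 = (1/2 + 1 : ℝ) by norm_num, Real.Gamma_add_one (by norm_num),
    Real.Gamma_one_half_eq]
  rw [show (-((2:ℝ)+1)/2) = (-(3:ℝ)/2) by norm_num]
  ring

lemma aux_gauss_int {v : ℝ≥0} (g : ℝ → ℝ) (hv : v ≠ 0) :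
    ∫ x, g x ∂(gaussianReal 0 v) = ∫ x, gaussianPDFReal 0 v x * g x := by
  rw [gaussianReal_of_var_ne_zero 0 hv]
  have hpdf : gaussianPDF 0 v = fun x => ((Real.toNNReal (gaussianPDFReal 0 v x) : ℝ≥0) : ℝ≥0∞) := rfl
  rw [hpdf, integral_withDensity_eq_integral_smul
    ((measurable_gaussianPDFReal 0 v).real_toNNReal) g]
  congr 1 with x
  rw [NNReal.smul_def, Real.coe_toNNReal _ (gaussianPDFReal_pos 0 v x hv).le, smul_eq_mul]

lemma aux_pdf_eq {v : ℝ≥0} (hv : v ≠ 0) (x : ℝ) :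
    gaussianPDFReal 0 v x = (Real.sqrt (2 * π * v))⁻¹ * rexp (-(2 * (v:ℝ))⁻¹ * x ^ 2) := by
  have hv' : (0:ℝ) < v := by positivity
  rw [gaussianPDFReal]
  have h : -(x - 0) ^ 2 / (2 * (v:ℝ)) = -(2 * (v:ℝ))⁻¹ * x ^ 2 := by
    field_simp
    ring
  rw [h]

lemma aux_gauss_sq {v : ℝ≥0} (hv : v ≠ 0) :
    ∫ x, x ^ 2 ∂(gaussianReal 0 v) = (v:ℝ) := by
  have hv' : (0:ℝ) < v := by positivity
  have hb : (0:ℝ) < (2*(v:ℝ))⁻¹ := by positivity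
  rw [aux_gauss_int _ hv]
  have heq : (fun x => gaussianPDFReal 0 v x * x ^ 2)
      = fun x => (Real.sqrt (2*π*(v:ℝ)))⁻¹ * (x ^ 2 * rexp (-(2*(v:ℝ))⁻¹ * x^2)) := by
    funext x; rw [aux_pdf_eq hv]; ring
  rw [heq, integral_const_mul, aux_int_sq hb]
  have h1 : ((2*(v:ℝ))⁻¹) ^ (-(3:ℝ)/2) = (2*(v:ℝ)) ^ ((3:ℝ)/2) := by
    rw [Real.inv_rpow (by positivity), ← Real.rpow_neg (by positivity)]
    norm_num
  have h2 : Real.sqrt (2*π*(v:ℝ)) = Real.sqrt π * (2*(v:ℝ)) ^ ((1:ℝ)/2) := by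
    rw [show 2*π*(v:ℝ) = π * (2*(v:ℝ)) by ring, Real.sqrt_mul pi_pos.le]
    simp [Real.sqrt_eq_rpow]
  have h3 : (2*(v:ℝ)) ^ ((3:ℝ)/2) = (2*(v:ℝ)) ^ ((1:ℝ)/2) * (2*(v:ℝ)) := by
    rw [show (3:ℝ)/2 = 1/2 + 1 by norm_num, Real.rpow_add (by positivity), Real.rpow_one]
  rw [h1, h2, h3]
  have hp : Real.sqrt π ≠ 0 := ne_of_gt (Real.sqrt_pos.mpr pi_pos)
  have hq : (2*(v:ℝ)) ^ ((1:ℝ)/2) ≠ 0 := ne_of_gt (Real.rpow_pos_of_pos (by positivity) _)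
  field_simp

lemma aux_gauss_mean {v : ℝ≥0} (hv : v ≠ 0) :
    ∫ x, x ∂(gaussianReal 0 v) = 0 := by
  rw [aux_gauss_int _ hv]
  have heq : (fun x => gaussianPDFReal 0 v x * x)
      = fun x => (Real.sqrt (2*π*(v:ℝ)))⁻¹ * (x * rexp (-(2*(v:ℝ))⁻¹ * x^2)) := by
    funext x; rw [aux_pdf_eq hv]; ring
  rw [heq, integral_const_mul, aux_int_odd, mul_zero]

lemma aux_gauss_integrable_sq {v : ℝ≥0} (hv : v ≠ 0) :
    Integrable (fun x => x ^ 2) (gaussianReal 0 v) := by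
  have hv' : (0:ℝ) < v := by positivity
  have hb : (0:ℝ) < (2*(v:ℝ))⁻¹ := by positivity
  rw [gaussianReal_of_var_ne_zero 0 hv]
  have hpdf : gaussianPDF 0 v
      = fun x => ((Real.toNNReal (gaussianPDFReal 0 v x) : ℝ≥0) : ℝ≥0∞) := rfl
  rw [hpdf, integrable_withDensity_iff_integrable_smul
    ((measurable_gaussianPDFReal 0 v).real_toNNReal)]
  have heq : (fun x => (Real.toNNReal (gaussianPDFReal 0 v x)) • (x ^ 2 : ℝ))
      = fun x => (Real.sqrt (2*π*(v:ℝ)))⁻¹ * (x ^ 2 * rexp (-(2*(v:ℝ))⁻¹ * x^2)) := by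
    funext x
    rw [NNReal.smul_def, Real.coe_toNNReal _ (gaussianPDFReal_pos 0 v x hv).le, smul_eq_mul,
      aux_pdf_eq hv]
    ring
  rw [heq]
  have : Integrable (fun x : ℝ => x ^ 2 * rexp (-(2*(v:ℝ))⁻¹ * x^2)) := by
    have h := integrable_rpow_mul_exp_neg_mul_sq hb (by norm_num : (-1:ℝ) < 2)
    have : (fun x : ℝ => x ^ (2:ℝ) * rexp (-(2*(v:ℝ))⁻¹ * x^2))
        = fun x : ℝ => x ^ 2 * rexp (-(2*(v:ℝ))⁻¹ * x^2) := by
      funext x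
      rw [show ((2:ℝ)) = ((2:ℕ):ℝ) by norm_num, Real.rpow_natCast]
    rwa [this] at h
  exact this.const_mul _

lemma aux_gauss_integrable_id {v : ℝ≥0} (hv : v ≠ 0) :
    Integrable (fun x => x) (gaussianReal 0 v) := by
  have hv' : (0:ℝ) < v := by positivity
  have hb : (0:ℝ) < (2*(v:ℝ))⁻¹ := by positivity
  rw [gaussianReal_of_var_ne_zero 0 hv]
  have hpdf : gaussianPDF 0 v
      = fun x => ((Real.toNNReal (gaussianPDFReal 0 v x) : ℝ≥0) : ℝ≥0∞) := rfl
  rw [hpdf, integrable_withDensity_iff_integrable_smul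
    ((measurable_gaussianPDFReal 0 v).real_toNNReal)]
  have heq : (fun x => (Real.toNNReal (gaussianPDFReal 0 v x)) • (x : ℝ))
      = fun x => (Real.sqrt (2*π*(v:ℝ)))⁻¹ * (x * rexp (-(2*(v:ℝ))⁻¹ * x^2)) := by
    funext x
    rw [NNReal.smul_def, Real.coe_toNNReal _ (gaussianPDFReal_pos 0 v x hv).le, smul_eq_mul,
      aux_pdf_eq hv]
    ring
  rw [heq]
  exact (integrable_mul_exp_neg_mul_sq hb).const_mul _

lemma aux_iIndepFun_precomp {Ω : Type*} [MeasureSpace Ω] {ι κ : Type*}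
    {β : Type*} [MeasurableSpace β] {f : ι → Ω → β}
    (h : iIndepFun f ℙ) {g : κ → ι}
    (hg : Function.Injective g) :
    iIndepFun (fun k => f (g k)) ℙ := by
  rw [iIndepFun_iff_measure_inter_preimage_eq_mul]
  intro S sets hsets
  classical
  have h' := (iIndepFun_iff_measure_inter_preimage_eq_mul.mp h) (S.image g)
    (sets := Function.extend g sets fun _ => Set.univ) ?_
  · have e1 : (⋂ i ∈ Finset.image g S, f i ⁻¹' Function.extend g sets (fun _ => Set.univ) i)
        = ⋂ k ∈ S, f (g k) ⁻¹' sets k := by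
      rw [Finset.set_biInter_finset_image]
      exact Set.iInter₂_congr fun k _ => by rw [hg.extend_apply]
    have e2 : (∏ i ∈ Finset.image g S, ℙ (f i ⁻¹' Function.extend g sets (fun _ => Set.univ) i))
        = ∏ k ∈ S, ℙ (f (g k) ⁻¹' sets k) := by
      rw [Finset.prod_image (fun a _ b _ hab => hg hab)]
      exact Finset.prod_congr rfl fun k _ => by rw [hg.extend_apply]
    rw [← e1, ← e2]
    exact h'
  · intro i hi
    rcases Finset.mem_image.mp hi with ⟨k, hk, rfl⟩
    rw [hg.extend_apply]
    exact hsets k hk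

lemma aux_identDistrib_sum {Ω : Type*} [MeasureSpace Ω]
    [IsProbabilityMeasure (ℙ : Measure Ω)] {ι : Type*} [DecidableEq ι]
    (X Y : ι → Ω → ℝ) (hXm : ∀ i, Measurable (X i)) (hYm : ∀ i, Measurable (Y i))
    (hX : iIndepFun X ℙ)
    (hY : iIndepFun Y ℙ)
    (hid : ∀ i, IdentDistrib (X i) (Y i) ℙ ℙ) (s : Finset ι) :
    IdentDistrib (fun ω => ∑ i ∈ s, X i ω) (fun ω => ∑ i ∈ s, Y i ω) ℙ ℙ := by
  induction s using Finset.induction_on with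
  | empty =>
    simp only [Finset.sum_empty]
    exact IdentDistrib.refl aemeasurable_const
  | insert a s ha ih =>
    have hSXm : Measurable fun ω => ∑ i ∈ s, X i ω := Finset.measurable_sum s fun i _ => hXm i
    have hSYm : Measurable fun ω => ∑ i ∈ s, Y i ω := Finset.measurable_sum s fun i _ => hYm i
    have hIX : IndepFun (X a) (fun ω => ∑ i ∈ s, X i ω) ℙ := by
      have := (hX.indepFun_finsetSum_of_notMem hXm ha).symm
      have he : (∑ i ∈ s, X i) = fun ω => ∑ i ∈ s, X i ω := by
        funext ω; simp [Finset.sum_apply]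
      rwa [he] at this
    have hIY : IndepFun (Y a) (fun ω => ∑ i ∈ s, Y i ω) ℙ := by
      have := (hY.indepFun_finsetSum_of_notMem hYm ha).symm
      have he : (∑ i ∈ s, Y i) = fun ω => ∑ i ∈ s, Y i ω := by
        funext ω; simp [Finset.sum_apply]
      rwa [he] at this
    have hmapX : Measure.map (fun ω => ∑ i ∈ insert a s, X i ω) ℙ
        = Measure.map (fun p : ℝ × ℝ => p.1 + p.2)
            ((Measure.map (X a) ℙ).prod (Measure.map (fun ω => ∑ i ∈ s, X i ω) ℙ)) := by
      rw [← (indepFun_iff_map_prod_eq_prod_map_map (hXm a).aemeasurable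
        hSXm.aemeasurable).mp hIX,
        Measure.map_map (show Measurable fun p : ℝ × ℝ => p.1 + p.2 from measurable_fst.add measurable_snd) ((hXm a).prodMk hSXm)]
      congr 1
      funext ω
      simp [Finset.sum_insert ha]
    have hmapY : Measure.map (fun ω => ∑ i ∈ insert a s, Y i ω) ℙ
        = Measure.map (fun p : ℝ × ℝ => p.1 + p.2)
            ((Measure.map (Y a) ℙ).prod (Measure.map (fun ω => ∑ i ∈ s, Y i ω) ℙ)) := by
      rw [← (indepFun_iff_map_prod_eq_prod_map_map (hYm a).aemeasurable
        hSYm.aemeasurable).mp hIY,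
        Measure.map_map (show Measurable fun p : ℝ × ℝ => p.1 + p.2 from measurable_fst.add measurable_snd) ((hYm a).prodMk hSYm)]
      congr 1
      funext ω
      simp [Finset.sum_insert ha]
    refine ⟨(Finset.measurable_sum _ fun i _ => hXm i).aemeasurable,
      (Finset.measurable_sum _ fun i _ => hYm i).aemeasurable, ?_⟩
    rw [hmapX, hmapY, (hid a).map_eq, ih.map_eq]

lemma aux_max_sq_le (x : ℝ) : max x 0 ^ 2 ≤ x ^ 2 := by
  rcases le_total x 0 with h | h
  · rw [max_eq_right h]; simpa using sq_nonneg x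
  · rw [max_eq_left h]

lemma aux_max_sq_add (x : ℝ) : max x 0 ^ 2 + max (-x) 0 ^ 2 = x ^ 2 := by
  rcases le_total x 0 with h | h
  · rw [max_eq_right h, max_eq_left (neg_nonneg.mpr h), neg_sq]; ring
  · rw [max_eq_left h, max_eq_right (neg_nonpos.mpr h)]; ring

/-- If `u ∈ ℝⁿ` is fixed and `R` is an `m×n` random matrix with entries i.i.d. `N(0, 2/m)`,
and `v = ReLU(Ru)` entrywise, then `E[‖v‖²] = ‖u‖²`. -/
theorem relu_layer_expected_norm {Ω : Type*} [MeasureSpace Ω]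
    [IsProbabilityMeasure (ℙ : Measure Ω)]
    (m n : ℕ) (hm : 0 < m) (u : Fin n → ℝ)
    (R : Ω → Matrix (Fin m) (Fin n) ℝ)
    (hmeas : ∀ i j, Measurable fun ω => R ω i j)
    (hgauss : ∀ i j, Measure.map (fun ω => R ω i j) ℙ =
      gaussianReal 0 (Real.toNNReal (2 / m)))
    (hindep : iIndepFun
      (fun (p : Fin m × Fin n) ω => R ω p.1 p.2) ℙ) :
    (∫ ω, ∑ i, (max ((R ω).mulVec u i) 0) ^ 2 ∂ℙ) = ∑ j, (u j) ^ 2 := by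
  classical
  have hm' : (0:ℝ) < m := by exact_mod_cast hm
  have h2m : (0:ℝ) < 2 / m := by positivity
  set v : ℝ≥0 := Real.toNNReal (2 / m) with hvdef
  have hv : v ≠ 0 := (Real.toNNReal_pos.mpr h2m).ne'
  have hvco : (v : ℝ) = 2 / m := Real.coe_toNNReal _ h2m.le
  -- entry-level facts
  have hE3 : ∀ i j, Integrable (fun ω => R ω i j) ℙ := by
    intro i j
    have h := aux_gauss_integrable_id hv
    rw [← hgauss i j] at h
    exact (integrable_map_measure measurable_id.aestronglyMeasurable
      (hmeas i j).aemeasurable).mp h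
  have hE4 : ∀ i j, Integrable (fun ω => (R ω i j) ^ 2) ℙ := by
    intro i j
    have h := aux_gauss_integrable_sq hv
    rw [← hgauss i j] at h
    exact (integrable_map_measure (measurable_id.pow_const 2).aestronglyMeasurable
      (hmeas i j).aemeasurable).mp h
  have hE1 : ∀ i j, ∫ ω, R ω i j ∂ℙ = 0 := by
    intro i j
    have h := integral_map (μ := (ℙ : Measure Ω)) (φ := fun ω => R ω i j) (f := fun x : ℝ => x)
      (hmeas i j).aemeasurable measurable_id.aestronglyMeasurable
    rw [hgauss i j, aux_gauss_mean hv] at h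
    exact h.symm
  have hE2 : ∀ i j, ∫ ω, (R ω i j) ^ 2 ∂ℙ = 2 / m := by
    intro i j
    have h := integral_map (μ := (ℙ : Measure Ω)) (φ := fun ω => R ω i j) (f := fun x : ℝ => x ^ 2)
      (hmeas i j).aemeasurable (measurable_id.pow_const 2).aestronglyMeasurable
    rw [hgauss i j, aux_gauss_sq hv] at h
    rw [← h, hvco]
  -- row sums
  set S : Fin m → Ω → ℝ := fun i ω => ∑ j, u j * R ω i j with hSdef
  have hSmeas : ∀ i, Measurable (S i) := fun i =>
    Finset.measurable_sum _ fun j _ => (hmeas i j).const_mul (u j)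
  have hmulVec : ∀ ω i, (R ω).mulVec u i = S i ω := by
    intro ω i
    simp only [Matrix.mulVec, dotProduct, hSdef]
    exact Finset.sum_congr rfl fun j _ => mul_comm _ _
  have hSmem : ∀ i, MemLp (S i) 2 ℙ := by
    intro i
    refine memLp_finsetSum _ fun j _ => ?_
    exact ((memLp_two_iff_integrable_sq
      (hmeas i j).aestronglyMeasurable).mpr (hE4 i j)).const_mul (u j)
  have hS2int : ∀ i, Integrable (fun ω => S i ω ^ 2) ℙ := fun i => (hSmem i).integrable_sq
  have hposint : ∀ i, Integrable (fun ω => max (S i ω) 0 ^ 2) ℙ := by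
    intro i
    refine (hS2int i).mono'
      (((hSmeas i).max measurable_const).pow_const 2).aestronglyMeasurable
      (ae_of_all _ fun ω => ?_)
    rw [Real.norm_eq_abs, abs_of_nonneg (by positivity)]
    exact aux_max_sq_le _
  have hnegint : ∀ i, Integrable (fun ω => max (-S i ω) 0 ^ 2) ℙ := by
    intro i
    refine (hS2int i).mono'
      (((hSmeas i).neg.max measurable_const).pow_const 2).aestronglyMeasurable
      (ae_of_all _ fun ω => ?_)
    rw [Real.norm_eq_abs, abs_of_nonneg (by positivity)]
    calc max (-S i ω) 0 ^ 2 ≤ (-S i ω) ^ 2 := aux_max_sq_le _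
    _ = S i ω ^ 2 := by ring
  -- identical distribution of S i and -S i
  have hIdent : ∀ i, IdentDistrib (S i) (fun ω => -S i ω) ℙ ℙ := by
    intro i
    have hrowind : iIndepFun (fun j ω => R ω i j) ℙ :=
      aux_iIndepFun_precomp hindep
        (g := fun j : Fin n => ((i, j) : Fin m × Fin n))
        (fun a b hab => by simpa using congrArg Prod.snd hab)
    set famA : Fin n → Ω → ℝ := fun j ω => u j * R ω i j with hfamA
    set famB : Fin n → Ω → ℝ := fun j ω => -u j * R ω i j with hfamB
    have hAm : ∀ j, Measurable (famA j) := fun j => (hmeas i j).const_mul _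
    have hBm : ∀ j, Measurable (famB j) := fun j => (hmeas i j).const_mul _
    have hA : iIndepFun famA ℙ :=
      hrowind.comp (fun j x => u j * x) fun j => measurable_id.const_mul _
    have hB : iIndepFun famB ℙ :=
      hrowind.comp (fun j x => -u j * x) fun j => measurable_id.const_mul _
    have hmapA : ∀ j, Measure.map (famA j) ℙ
        = gaussianReal (u j * 0) (⟨(u j) ^ 2, sq_nonneg _⟩ * v) := by
      intro j
      rw [hfamA]
      rw [show (fun j (ω : Ω) => u j * R ω i j) j = (fun x => u j * x) ∘ (fun ω => R ω i j)
        from rfl, ← Measure.map_map (show Measurable fun x : ℝ => u j * x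
          from measurable_id.const_mul _) (hmeas i j), hgauss i j]
      exact gaussianReal_map_const_mul _
    have hmapB : ∀ j, Measure.map (famB j) ℙ
        = gaussianReal (-u j * 0) (⟨(-u j) ^ 2, sq_nonneg _⟩ * v) := by
      intro j
      rw [hfamB]
      rw [show (fun j (ω : Ω) => -u j * R ω i j) j = (fun x => -u j * x) ∘ (fun ω => R ω i j)
        from rfl, ← Measure.map_map (show Measurable fun x : ℝ => -u j * x
          from measurable_id.const_mul _) (hmeas i j), hgauss i j]
      exact gaussianReal_map_const_mul _
    have hid : ∀ j, IdentDistrib (famA j) (famB j) ℙ ℙ := by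
      intro j
      refine ⟨(hAm j).aemeasurable, (hBm j).aemeasurable, ?_⟩
      rw [hmapA j, hmapB j]
      congr 1
      · ring
      · exact NNReal.coe_injective (by simp)
    have hsum := aux_identDistrib_sum famA famB hAm hBm hA hB hid Finset.univ
    have hneg : (fun ω => ∑ j, famB j ω) = fun ω => -S i ω := by
      funext ω
      simp only [hfamB, hSdef, neg_mul, ← Finset.sum_neg_distrib]
    rwa [hneg] at hsum
  have hhalf : ∀ i, ∫ ω, max (S i ω) 0 ^ 2 ∂ℙ = ∫ ω, max (-S i ω) 0 ^ 2 ∂ℙ :=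
    fun i => ((hIdent i).comp
      ((measurable_id.max measurable_const).pow_const 2)).integral_eq
  -- second moment of S i
  have hSsq : ∀ i, ∫ ω, S i ω ^ 2 ∂ℙ = (∑ j, u j ^ 2) * (2 / m) := by
    intro i
    have hTint : ∀ j k, Integrable (fun ω => (u j * R ω i j) * (u k * R ω i k)) ℙ := by
      intro j k
      by_cases hjk : j = k
      · subst hjk
        have h := (hE4 i j).const_mul (u j * u j)
        refine h.congr (ae_of_all _ fun ω => ?_)
        ring
      · have hIJ : IndepFun (fun ω => R ω i j) (fun ω => R ω i k) ℙ :=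
          hindep.indepFun (by simp [hjk] : ((i, j) : Fin m × Fin n) ≠ (i, k))
        have hI2 : IndepFun (fun ω => u j * R ω i j) (fun ω => u k * R ω i k) ℙ :=
          hIJ.comp (measurable_id.const_mul (u j)) (measurable_id.const_mul (u k))
        exact hI2.integrable_mul ((hE3 i j).const_mul _) ((hE3 i k).const_mul _)
    have hexp : ∀ ω, S i ω ^ 2 = ∑ j, ∑ k, (u j * R ω i j) * (u k * R ω i k) := by
      intro ω
      rw [hSdef]
      rw [sq, Finset.sum_mul_sum]
    calc ∫ ω, S i ω ^ 2 ∂ℙ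
        = ∫ ω, ∑ j, ∑ k, (u j * R ω i j) * (u k * R ω i k) ∂ℙ := by
          exact integral_congr_ae (ae_of_all _ fun ω => hexp ω)
      _ = ∑ j, ∫ ω, ∑ k, (u j * R ω i j) * (u k * R ω i k) ∂ℙ :=
          integral_finset_sum _ fun j _ => integrable_finset_sum _ fun k _ => hTint j k
      _ = ∑ j, ∑ k, ∫ ω, (u j * R ω i j) * (u k * R ω i k) ∂ℙ :=
          Finset.sum_congr rfl fun j _ => integral_finset_sum _ fun k _ => hTint j k
      _ = ∑ j, u j ^ 2 * (2 / m) := by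
          refine Finset.sum_congr rfl fun j _ => ?_
          rw [Finset.sum_eq_single j]
          · have : (fun ω => (u j * R ω i j) * (u j * R ω i j))
                = fun ω => (u j * u j) * (R ω i j) ^ 2 := by
              funext ω; ring
            rw [this, integral_const_mul, hE2 i j, sq]
          · intro k _ hkj
            have hIJ : IndepFun (fun ω => R ω i j) (fun ω => R ω i k) ℙ :=
              hindep.indepFun (by simp [Ne.symm hkj] : ((i, j) : Fin m × Fin n) ≠ (i, k))
            have hI2 : IndepFun (fun ω => u j * R ω i j) (fun ω => u k * R ω i k) ℙ :=
              hIJ.comp (measurable_id.const_mul (u j)) (measurable_id.const_mul (u k))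
            have hmul : ∫ ω, u j * R ω i j * (u k * R ω i k) ∂ℙ
                = (∫ ω, u j * R ω i j ∂ℙ) * ∫ ω, u k * R ω i k ∂ℙ :=
              hI2.integral_mul_eq_mul_integral ((hE3 i j).const_mul _).aestronglyMeasurable ((hE3 i k).const_mul _).aestronglyMeasurable
            rw [hmul, integral_const_mul, integral_const_mul, hE1 i j, hE1 i k]
            ring
          · intro h
            exact absurd (Finset.mem_univ j) h
      _ = (∑ j, u j ^ 2) * (2 / m) := by rw [Finset.sum_mul]
  -- per-row value
  have hrow : ∀ i, ∫ ω, max (S i ω) 0 ^ 2 ∂ℙ = (∑ j, u j ^ 2) / m := by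
    intro i
    have hsplit : ∫ ω, S i ω ^ 2 ∂ℙ
        = (∫ ω, max (S i ω) 0 ^ 2 ∂ℙ) + ∫ ω, max (-S i ω) 0 ^ 2 ∂ℙ := by
      rw [← integral_add (hposint i) (hnegint i)]
      exact integral_congr_ae (ae_of_all _ fun ω => (aux_max_sq_add (S i ω)).symm)
    have h2 := hhalf i
    have h3 := hSsq i
    have : 2 * ∫ ω, max (S i ω) 0 ^ 2 ∂ℙ = (∑ j, u j ^ 2) * (2 / m) := by
      rw [← h3, hsplit, h2]; ring
    field_simp at this ⊢
    linarith
  -- conclude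
  calc ∫ ω, ∑ i, max ((R ω).mulVec u i) 0 ^ 2 ∂ℙ
      = ∫ ω, ∑ i, max (S i ω) 0 ^ 2 ∂ℙ := by
        refine integral_congr_ae (ae_of_all _ fun ω => ?_)
        exact Finset.sum_congr rfl fun i _ => by rw [hmulVec ω i]
    _ = ∑ i, ∫ ω, max (S i ω) 0 ^ 2 ∂ℙ := integral_finset_sum _ fun i _ => hposint i
    _ = ∑ i : Fin m, (∑ j, u j ^ 2) / m := Finset.sum_congr rfl fun i _ => hrow i
    _ = m * ((∑ j, u j ^ 2) / m) := by
        rw [Finset.sum_const, Finset.card_univ, Fintype.card_fin, nsmul_eq_mul]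
    _ = ∑ j, u j ^ 2 := by field_simp
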